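/- For a three-qubit product state ρ_A ⊗ ρ_B ⊗ ρ_C and local observables M_K^i with (M_K^i)² = I, the Bell-type combination I(ρ, M_A^1, M_B^1, M_C^2) + I(ρ, M_A^1, M_B^2, M_C^1) + I(ρ, M_A^2, M_B^1, M_C^1) − I(ρ, M_A^2, M_B^2, M_C^2) equals 2[I(ρ_A, M_A^1) + I(ρ_B, M_B^1) + I(ρ_C, M_C^1)] and is at most 6. -/

import Mathlib

open Matrix Kronecker
open scoped ComplexOrder Classical

/-- The positive semidefinite square root, as `Matrix.PosSemidef.sqrt` was defined in Mathlib
of December 2024 (that declaration has since been removed). -/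
noncomputable def posSemidefSqrtOld {n : Type*} [Fintype n] [DecidableEq n]
    {ρ : Matrix n n ℂ} (h : ρ.PosSemidef) : Matrix n n ℂ :=
  h.1.eigenvectorUnitary.1 * diagonal ((↑) ∘ (√·) ∘ h.1.eigenvalues) *
    (star h.1.eigenvectorUnitary : Matrix n n ℂ)

/-- The Wigner–Yanase skew information `I(ρ,X) = -(1/2) Tr [√ρ, X]²`. -/
noncomputable def skewInfo {n : Type*} [Fintype n] [DecidableEq n]
    (ρ X : Matrix n n ℂ) : ℝ :=
  if h : ρ.PosSemidef then
    (-(1/2 : ℂ) * Matrix.trace ((posSemidefSqrtOld h * X - X * posSemidefSqrtOld h) ^ 2)).re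
  else 0

/-- Skew information of a three-qubit state with respect to the locally acting
observable `X⊗I⊗I + I⊗Y⊗I + I⊗I⊗Z`. -/
noncomputable def skewInfo3 (ρ : Matrix ((Fin 2 × Fin 2) × Fin 2) ((Fin 2 × Fin 2) × Fin 2) ℂ)
    (X Y Z : Matrix (Fin 2) (Fin 2) ℂ) : ℝ :=
  skewInfo ρ (X ⊗ₖ (1 : Matrix (Fin 2) (Fin 2) ℂ) ⊗ₖ (1 : Matrix (Fin 2) (Fin 2) ℂ)
    + (1 : Matrix (Fin 2) (Fin 2) ℂ) ⊗ₖ Y ⊗ₖ (1 : Matrix (Fin 2) (Fin 2) ℂ)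
    + (1 : Matrix (Fin 2) (Fin 2) ℂ) ⊗ₖ (1 : Matrix (Fin 2) (Fin 2) ℂ) ⊗ₖ Z)

section OldSqrt

open scoped MatrixOrder

variable {n : Type*} [Fintype n] [DecidableEq n]

lemma posSemidefSqrtOld_eq_cfc {ρ : Matrix n n ℂ} (h : ρ.PosSemidef) :
    posSemidefSqrtOld h = CFC.sqrt ρ := by
  rw [CFC.sqrt_eq_cfc, cfc_nnreal_eq_real _ ρ, h.1.cfc_eq]
  simp only [IsHermitian.cfc, Unitary.conjStarAlgAut_apply, posSemidefSqrtOld]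
  congr 3
  funext i
  simp only [Function.comp_apply, Real.coe_sqrt, Real.coe_toNNReal',
    max_eq_left (h.eigenvalues_nonneg i)]
  rfl

lemma Matrix.PosSemidef.posSemidef_sqrt {ρ : Matrix n n ℂ} (h : ρ.PosSemidef) :
    (posSemidefSqrtOld h).PosSemidef := by
  rw [posSemidefSqrtOld_eq_cfc]
  exact (CFC.sqrt_nonneg ρ).posSemidef

lemma Matrix.PosSemidef.sqrt_mul_self {ρ : Matrix n n ℂ} (h : ρ.PosSemidef) :
    posSemidefSqrtOld h * posSemidefSqrtOld h = ρ := by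
  rw [posSemidefSqrtOld_eq_cfc]
  exact CFC.sqrt_mul_sqrt_self ρ h.nonneg

lemma Matrix.PosSemidef.eq_sqrt_of_sq_eq {B : Matrix n n ℂ} (hB : B.PosSemidef)
    {A : Matrix n n ℂ} (hA : A.PosSemidef) (hBA : B ^ 2 = A) : B = posSemidefSqrtOld hA := by
  rw [posSemidefSqrtOld_eq_cfc]
  exact (CFC.sqrt_unique (by rw [← hBA, pow_two]) hB.nonneg).symm

end OldSqrt

section Aux

variable {l m n p : Type*}

lemma sub_kron (A B : Matrix l m ℂ) (C : Matrix n p ℂ) :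
    (A - B) ⊗ₖ C = A ⊗ₖ C - B ⊗ₖ C := by
  ext ⟨i, k⟩ ⟨j, l'⟩
  simp [Matrix.kroneckerMap_apply, sub_mul]

lemma kron_sub (A : Matrix l m ℂ) (B C : Matrix n p ℂ) :
    A ⊗ₖ (B - C) = A ⊗ₖ B - A ⊗ₖ C := by
  ext ⟨i, k⟩ ⟨j, l'⟩
  simp [Matrix.kroneckerMap_apply, mul_sub]

lemma kron_conjTranspose (A : Matrix l m ℂ) (B : Matrix n p ℂ) :
    (A ⊗ₖ B)ᴴ = Aᴴ ⊗ₖ Bᴴ := by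
  ext ⟨i, k⟩ ⟨j, l'⟩
  simp [Matrix.kroneckerMap_apply, Matrix.conjTranspose_apply, mul_comm]

variable [Fintype m] [Fintype n] [DecidableEq m] [DecidableEq n]

lemma posSemidef_kron {A : Matrix m m ℂ} {B : Matrix n n ℂ}
    (hA : A.PosSemidef) (hB : B.PosSemidef) : (A ⊗ₖ B).PosSemidef := by
  exact hA.kronecker hB

lemma sqrt_kron {A : Matrix m m ℂ} {B : Matrix n n ℂ}
    (hA : A.PosSemidef) (hB : B.PosSemidef) :
    posSemidefSqrtOld (posSemidef_kron hA hB) = posSemidefSqrtOld hA ⊗ₖ posSemidefSqrtOld hB := by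
  refine ((posSemidef_kron hA.posSemidef_sqrt hB.posSemidef_sqrt).eq_sqrt_of_sq_eq
    (posSemidef_kron hA hB) ?_).symm
  rw [pow_two, ← Matrix.mul_kronecker_mul, hA.sqrt_mul_self, hB.sqrt_mul_self]

lemma trace_re_nonneg {A : Matrix m m ℂ} (hA : A.PosSemidef) : 0 ≤ A.trace.re := by
  rw [Matrix.trace]
  rw [Complex.re_sum]
  refine Finset.sum_nonneg fun i _ => ?_
  have h := hA.re_dotProduct_nonneg (Pi.single i 1)
  simpa [dotProduct, Matrix.mulVec, Pi.single_apply] using h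

lemma trace_comm_left (a X : Matrix m m ℂ) :
    Matrix.trace ((a * X - X * a) * a) = 0 := by
  rw [Matrix.sub_mul, Matrix.trace_sub, sub_eq_zero, Matrix.trace_mul_cycle X a a]

lemma trace_comm_right (a X : Matrix m m ℂ) :
    Matrix.trace (a * (a * X - X * a)) = 0 := by
  rw [Matrix.mul_sub, Matrix.trace_sub, sub_eq_zero, Matrix.trace_mul_comm a (a * X),
    Matrix.trace_mul_comm a (X * a), Matrix.trace_mul_cycle X a a]

/-- Skew information is at most 1 for a qubit-type observable squaring to the identity. -/
lemma skewInfo_le_one {A M : Matrix m m ℂ} (hA : A.PosSemidef) (hA1 : A.trace = 1)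
    (hM : M.IsHermitian) (hM2 : M ^ 2 = 1) : skewInfo A M ≤ 1 := by
  rw [skewInfo, dif_pos hA]
  set s := posSemidefSqrtOld hA with hsdef
  have hs : s.PosSemidef := hA.posSemidef_sqrt
  have hMM : M * M = 1 := by rw [← pow_two, hM2]
  have hss : s * s = A := hA.sqrt_mul_self
  have key : Matrix.trace ((s * M - M * s) ^ 2)
      = 2 * Matrix.trace (s * M * s * M) - 2 := by
    have e : (s * M - M * s) ^ 2
        = s * M * s * M - s * M * M * s - M * s * s * M + M * s * M * s := by
      rw [pow_two]; noncomm_ring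
    rw [e]
    rw [Matrix.trace_add, Matrix.trace_sub, Matrix.trace_sub]
    have h1 : Matrix.trace (s * M * M * s) = 1 := by
      rw [Matrix.trace_mul_comm (s * M * M) s]
      simp only [← Matrix.mul_assoc]
      rw [hss, Matrix.mul_assoc, hMM, Matrix.mul_one, hA1]
    have h2 : Matrix.trace (M * s * s * M) = 1 := by
      rw [Matrix.trace_mul_comm (M * s * s) M]
      simp only [← Matrix.mul_assoc]
      rw [hMM, Matrix.one_mul, hss, hA1]
    have h3 : Matrix.trace (M * s * M * s) = Matrix.trace (s * M * s * M) := by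
      rw [Matrix.trace_mul_comm (M * s * M) s]
      simp only [← Matrix.mul_assoc]
    rw [h1, h2, h3]; ring
  rw [key]
  have hpos : 0 ≤ (Matrix.trace (s * M * s * M)).re := by
    have hP : (M * s * M).PosSemidef := by
      have := hs.conjTranspose_mul_mul_same M
      rwa [hM.eq] at this
    set q := posSemidefSqrtOld hs with hq
    have hqq : q * q = s := hs.sqrt_mul_self
    have hq2 : (q * (M * s * M) * q).PosSemidef := by
      have := hP.conjTranspose_mul_mul_same q
      rwa [hs.posSemidef_sqrt.isHermitian.eq] at this
    have e : Matrix.trace (q * (M * s * M) * q) = Matrix.trace (s * M * s * M) := by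
      rw [Matrix.trace_mul_comm (q * (M * s * M)) q]
      simp only [← Matrix.mul_assoc]
      rw [hqq]
    rw [← e]
    exact trace_re_nonneg hq2
  have : (-(1 / 2 : ℂ) * (2 * Matrix.trace (s * M * s * M) - 2)).re
      = 1 - (Matrix.trace (s * M * s * M)).re := by
    have : (-(1 / 2 : ℂ) * (2 * Matrix.trace (s * M * s * M) - 2))
        = 1 - Matrix.trace (s * M * s * M) := by ring
    rw [this, Complex.sub_re]; norm_num
  rw [this]
  linarith

end Aux

lemma trace_kron3 {A B C : Matrix (Fin 2) (Fin 2) ℂ} :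
    Matrix.trace (A ⊗ₖ B ⊗ₖ C) = Matrix.trace A * Matrix.trace B * Matrix.trace C := by
  rw [Matrix.trace_kronecker, Matrix.trace_kronecker]

/-- Additivity of skew information over a three-fold product state. -/
lemma skewInfo3_additive
    (ρA ρB ρC : Matrix (Fin 2) (Fin 2) ℂ)
    (hA : ρA.PosSemidef) (hA1 : ρA.trace = 1)
    (hB : ρB.PosSemidef) (hB1 : ρB.trace = 1)
    (hC : ρC.PosSemidef) (hC1 : ρC.trace = 1)
    (X Y Z : Matrix (Fin 2) (Fin 2) ℂ) :
    skewInfo3 (ρA ⊗ₖ ρB ⊗ₖ ρC) X Y Z = skewInfo ρA X + skewInfo ρB Y + skewInfo ρC Z := by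
  have hAB : (ρA ⊗ₖ ρB).PosSemidef := posSemidef_kron hA hB
  have hρ : (ρA ⊗ₖ ρB ⊗ₖ ρC).PosSemidef := posSemidef_kron hAB hC
  rw [skewInfo3, skewInfo, skewInfo, skewInfo, skewInfo,
    dif_pos hρ, dif_pos hA, dif_pos hB, dif_pos hC]
  set a := posSemidefSqrtOld hA with hadef
  set b := posSemidefSqrtOld hB with hbdef
  set c := posSemidefSqrtOld hC with hcdef
  have hs : posSemidefSqrtOld hρ = a ⊗ₖ b ⊗ₖ c := by
    have h1 : posSemidefSqrtOld hAB = a ⊗ₖ b := sqrt_kron hA hB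
    have h2 := sqrt_kron hAB hC
    rw [h1] at h2
    convert h2 using 2
  have htb : Matrix.trace (b * b) = 1 := by rw [hB.sqrt_mul_self, hB1]
  have hta : Matrix.trace (a * a) = 1 := by rw [hA.sqrt_mul_self, hA1]
  have htc : Matrix.trace (c * c) = 1 := by rw [hC.sqrt_mul_self, hC1]
  set O := X ⊗ₖ (1 : Matrix (Fin 2) (Fin 2) ℂ) ⊗ₖ (1 : Matrix (Fin 2) (Fin 2) ℂ)
    + (1 : Matrix (Fin 2) (Fin 2) ℂ) ⊗ₖ Y ⊗ₖ (1 : Matrix (Fin 2) (Fin 2) ℂ)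
    + (1 : Matrix (Fin 2) (Fin 2) ℂ) ⊗ₖ (1 : Matrix (Fin 2) (Fin 2) ℂ) ⊗ₖ Z with hO
  have e1 : posSemidefSqrtOld hρ * O - O * posSemidefSqrtOld hρ
      = (a * X - X * a) ⊗ₖ b ⊗ₖ c + a ⊗ₖ (b * Y - Y * b) ⊗ₖ c
        + a ⊗ₖ b ⊗ₖ (c * Z - Z * c) := by
    rw [hs, hO]
    simp only [Matrix.mul_add, Matrix.add_mul, ← Matrix.mul_kronecker_mul,
      Matrix.mul_one, Matrix.one_mul, sub_kron, kron_sub]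
    abel
  have key : Matrix.trace ((posSemidefSqrtOld hρ * O - O * posSemidefSqrtOld hρ) ^ 2)
      = Matrix.trace ((a * X - X * a) ^ 2) + Matrix.trace ((b * Y - Y * b) ^ 2)
        + Matrix.trace ((c * Z - Z * c) ^ 2) := by
    rw [e1, pow_two]
    simp only [Matrix.mul_add, Matrix.add_mul, ← Matrix.mul_kronecker_mul,
      Matrix.trace_add, trace_kron3, trace_comm_left, trace_comm_right,
      hta, htb, htc, pow_two]
    ring
  rw [key]
  rw [mul_add, mul_add, Complex.add_re, Complex.add_re]

theorem stmt_11
    (ρA ρB ρC : Matrix (Fin 2) (Fin 2) ℂ)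
    (hA : ρA.PosSemidef) (hA1 : ρA.trace = 1)
    (hB : ρB.PosSemidef) (hB1 : ρB.trace = 1)
    (hC : ρC.PosSemidef) (hC1 : ρC.trace = 1)
    (MA1 MA2 MB1 MB2 MC1 MC2 : Matrix (Fin 2) (Fin 2) ℂ)
    (hMA1 : MA1.IsHermitian) (hMA1sq : MA1 ^ 2 = 1)
    (hMA2 : MA2.IsHermitian) (hMA2sq : MA2 ^ 2 = 1)
    (hMB1 : MB1.IsHermitian) (hMB1sq : MB1 ^ 2 = 1)
    (hMB2 : MB2.IsHermitian) (hMB2sq : MB2 ^ 2 = 1)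
    (hMC1 : MC1.IsHermitian) (hMC1sq : MC1 ^ 2 = 1)
    (hMC2 : MC2.IsHermitian) (hMC2sq : MC2 ^ 2 = 1) :
    skewInfo3 (ρA ⊗ₖ ρB ⊗ₖ ρC) MA1 MB1 MC2
        + skewInfo3 (ρA ⊗ₖ ρB ⊗ₖ ρC) MA1 MB2 MC1
        + skewInfo3 (ρA ⊗ₖ ρB ⊗ₖ ρC) MA2 MB1 MC1
        - skewInfo3 (ρA ⊗ₖ ρB ⊗ₖ ρC) MA2 MB2 MC2
      = 2 * (skewInfo ρA MA1 + skewInfo ρB MB1 + skewInfo ρC MC1) ∧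
    skewInfo3 (ρA ⊗ₖ ρB ⊗ₖ ρC) MA1 MB1 MC2
        + skewInfo3 (ρA ⊗ₖ ρB ⊗ₖ ρC) MA1 MB2 MC1
        + skewInfo3 (ρA ⊗ₖ ρB ⊗ₖ ρC) MA2 MB1 MC1
        - skewInfo3 (ρA ⊗ₖ ρB ⊗ₖ ρC) MA2 MB2 MC2 ≤ 6 := by
  have h1 := skewInfo3_additive ρA ρB ρC hA hA1 hB hB1 hC hC1 MA1 MB1 MC2
  have h2 := skewInfo3_additive ρA ρB ρC hA hA1 hB hB1 hC hC1 MA1 MB2 MC1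
  have h3 := skewInfo3_additive ρA ρB ρC hA hA1 hB hB1 hC hC1 MA2 MB1 MC1
  have h4 := skewInfo3_additive ρA ρB ρC hA hA1 hB hB1 hC hC1 MA2 MB2 MC2
  have heq : skewInfo3 (ρA ⊗ₖ ρB ⊗ₖ ρC) MA1 MB1 MC2
        + skewInfo3 (ρA ⊗ₖ ρB ⊗ₖ ρC) MA1 MB2 MC1
        + skewInfo3 (ρA ⊗ₖ ρB ⊗ₖ ρC) MA2 MB1 MC1
        - skewInfo3 (ρA ⊗ₖ ρB ⊗ₖ ρC) MA2 MB2 MC2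
      = 2 * (skewInfo ρA MA1 + skewInfo ρB MB1 + skewInfo ρC MC1) := by
    rw [h1, h2, h3, h4]; ring
  refine ⟨heq, ?_⟩
  rw [heq]
  have bA := skewInfo_le_one hA hA1 hMA1 hMA1sq
  have bB := skewInfo_le_one hB hB1 hMB1 hMB1sq
  have bC := skewInfo_le_one hC hC1 hMC1 hMC1sq
  linarith
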